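/- arXiv:2412.19047 — 5 statements merged into one kernel-verified Lean document; each statement's English description precedes it below -/
import Mathlib

section
/- Suppose H is a Hilbert space of complex-valued functions on a set T and φ : E → H with φ(t,x) := φ(x)(t). If for every t ∈ T the function x ↦ conj(φ(t,x)) belongs to the RKHS Ĥ = φ̂(H) and the inversion formula f(t) = ⟨f̂, conj(φ(t,·))⟩_{Ĥ} holds for all f in the closed linear span of φ(E), then the closed subspace cspan φ(E) of H is an RKHS on T (i.e., point evaluations on cspan φ(E) are bounded). -/
/- STATEMENT 4: `H` is a Hilbert space of functions on `T` (realized by the injective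
linear map `evT`), `φ : E → H`, with `φ(t,x) = (φ x)(t) = evT (φ x) t`.  The operator range
`Ĥ` is realized as the Hilbert space `W` of functions on `E` via `ι`, with `Φ` the induced
coisometry, `ι (Φ f) x = ⟨f, φ x⟩` (Mathlib: `⟪φ x, f⟫`).  If for every `t` the function
`x ↦ conj (φ(t,x))` belongs to `Ĥ` (i.e. equals `ι g` for some `g ∈ W`) and the inversion
formula `f t = ⟨Φ f, g⟩_{Ĥ}` (Mathlib: `⟪g, Φ f⟫`) holds for all `f` in the closed linear
span of `φ(E)`, then that closed span is an RKHS on `T`: all point evaluations on it are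
bounded. -/
theorem stmt4 {H : Type*} [NormedAddCommGroup H] [InnerProductSpace ℂ H] [CompleteSpace H]
    {W : Type*} [NormedAddCommGroup W] [InnerProductSpace ℂ W] [CompleteSpace W]
    {E T : Type*} (φ : E → H)
    (evT : H →ₗ[ℂ] (T → ℂ)) (hevT : Function.Injective evT)
    (ι : W →ₗ[ℂ] (E → ℂ)) (hι : Function.Injective ι)
    (Φ : H →ₗ[ℂ] W)
    (hΦ : ∀ (f : H) (x : E), ι (Φ f) x = (inner ℂ (φ x) f : ℂ))
    (hsurj : Function.Surjective Φ)
    (hco : ∀ f ∈ (LinearMap.ker Φ)ᗮ, ‖Φ f‖ = ‖f‖)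
    (hinv : ∀ t : T, ∃ g : W,
      (∀ x : E, ι g x = (starRingEnd ℂ) (evT (φ x) t)) ∧
      (∀ f ∈ (Submodule.span ℂ (Set.range φ)).topologicalClosure,
        evT f t = (inner ℂ g (Φ f) : ℂ))) :
    ∀ t : T, ∃ C : ℝ,
      ∀ f ∈ (Submodule.span ℂ (Set.range φ)).topologicalClosure,
        ‖evT f t‖ ≤ C * ‖f‖ := by
  intro t
  obtain ⟨g, _, hg2⟩ := hinv t
  refine ⟨‖g‖, fun f hf => ?_⟩
  have hle : (Submodule.span ℂ (Set.range φ)).topologicalClosure ≤ (LinearMap.ker Φ)ᗮ := by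
    apply Submodule.topologicalClosure_minimal
    · rw [Submodule.span_le]
      rintro _ ⟨x, rfl⟩
      intro k hk
      have h0 := hΦ k x
      rw [LinearMap.mem_ker.mp hk] at h0
      simp only [map_zero] at h0
      rw [← inner_conj_symm, ← h0]
      simp
    · exact Submodule.isClosed_orthogonal _
  rw [hg2 f hf]
  calc ‖(inner ℂ g (Φ f) : ℂ)‖ ≤ ‖g‖ * ‖Φ f‖ := norm_inner_le_norm _ _
    _ = ‖g‖ * ‖f‖ := by rw [hco f (hle hf)]
end

section
/- Suppose H is a Hilbert space of complex-valued functions on a set T and φ : E → H with φ(t,x) := φ(x)(t). If the closed linear span of φ(E) is an RKHS on T (point evaluations are bounded on it), then for every t ∈ T the function x ↦ conj(φ(t,x)) lies in Ĥ = φ̂(H), and for every f in the closed linear span of φ(E) and every t ∈ T, f(t) = ⟨f̂, conj(φ(t,·))⟩_{Ĥ}. -/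
/- STATEMENT 5 (converse direction of the main theorem): same setting as Statement 4.
If the closed linear span of `φ(E)` (a Hilbert space of functions on `T` via `evT`)
is an RKHS on `T`, i.e. all point evaluations on it are bounded, then for every `t ∈ T`
the function `x ↦ conj (φ(t,x))` lies in `Ĥ = φ̂(H)` (realized as `W` via `ι`), and the
inversion formula `f t = ⟨f̂, conj φ(t,·)⟩_{Ĥ}` (Mathlib: `⟪g, Φ f⟫`) holds for every `f`
in the closed linear span of `φ(E)`. -/
theorem stmt5 {H : Type*} [NormedAddCommGroup H] [InnerProductSpace ℂ H] [CompleteSpace H]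
    {W : Type*} [NormedAddCommGroup W] [InnerProductSpace ℂ W] [CompleteSpace W]
    {E T : Type*} (φ : E → H)
    (evT : H →ₗ[ℂ] (T → ℂ)) (hevT : Function.Injective evT)
    (ι : W →ₗ[ℂ] (E → ℂ)) (hι : Function.Injective ι)
    (Φ : H →ₗ[ℂ] W)
    (hΦ : ∀ (f : H) (x : E), ι (Φ f) x = (inner ℂ (φ x) f : ℂ))
    (hsurj : Function.Surjective Φ)
    (hco : ∀ f ∈ (LinearMap.ker Φ)ᗮ, ‖Φ f‖ = ‖f‖)
    (hRKHS : ∀ t : T, ∃ C : ℝ,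
      ∀ f ∈ (Submodule.span ℂ (Set.range φ)).topologicalClosure,
        ‖evT f t‖ ≤ C * ‖f‖) :
    ∀ t : T, ∃ g : W,
      (∀ x : E, ι g x = (starRingEnd ℂ) (evT (φ x) t)) ∧
      (∀ f ∈ (Submodule.span ℂ (Set.range φ)).topologicalClosure,
        evT f t = (inner ℂ g (Φ f) : ℂ)) := by
  intro t
  set S : Submodule ℂ H := (Submodule.span ℂ (Set.range φ)).topologicalClosure with hSdef
  haveI : CompleteSpace S :=
    (Submodule.isClosed_topologicalClosure _).completeSpace_coe
  obtain ⟨C, hC⟩ := hRKHS t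
  -- the evaluation functional on S
  let L0 : S →ₗ[ℂ] ℂ :=
    { toFun := fun f => evT (f : H) t
      map_add' := fun f g => by simp
      map_smul' := fun c f => by simp }
  have hC' : ∀ f : S, ‖L0 f‖ ≤ C * ‖f‖ := fun f => by
    simpa [L0] using hC (f : H) f.2
  let L : S →L[ℂ] ℂ := LinearMap.mkContinuous L0 C hC'
  -- Riesz representation
  let k : S := (InnerProductSpace.toDual ℂ S).symm L
  have hk : ∀ f : S, (inner ℂ ((k : S) : H) ((f : S) : H) : ℂ) = evT (f : H) t := by
    intro f
    have h1 : (inner ℂ k f : ℂ) = L f := InnerProductSpace.toDual_symm_apply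
    simpa [L, L0, Submodule.coe_inner] using h1
  -- kernel of Φ is the orthogonal complement of the span
  have key : ∀ f : H, (Φ f = 0 ↔ ∀ x, (inner ℂ (φ x) f : ℂ) = 0) := by
    intro f
    constructor
    · intro h x
      rw [← hΦ, h]
      simp
    · intro h
      apply hι
      funext x
      simp [hΦ, h x]
  have hker : LinearMap.ker Φ = (Submodule.span ℂ (Set.range φ))ᗮ := by
    ext f
    rw [LinearMap.mem_ker, key, Submodule.mem_orthogonal']
    constructor
    · intro h u hu
      have hsub : Set.range φ ⊆ (LinearMap.ker (innerSL ℂ f : H →ₗ[ℂ] ℂ) : Set H) := by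
        rintro _ ⟨x, rfl⟩
        have := h x
        simp only [SetLike.mem_coe, LinearMap.mem_ker, ContinuousLinearMap.coe_coe,
          innerSL_apply_apply]
        rwa [← inner_eq_zero_symm]
      have := Submodule.span_le.2 hsub hu
      simpa using this
    · intro h x
      rw [inner_eq_zero_symm]
      exact h _ (Submodule.subset_span ⟨x, rfl⟩)
  have hKS : (LinearMap.ker Φ)ᗮ = S := by
    rw [hker, Submodule.orthogonal_orthogonal_eq_closure]
  -- Φ restricted to (ker Φ)ᗮ is a linear isometry
  let J : (LinearMap.ker Φ)ᗮ →ₗᵢ[ℂ] W :=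
    ⟨Φ.comp (Submodule.subtype _), fun f => hco (f : H) f.2⟩
  have hJ : ∀ a b : (LinearMap.ker Φ)ᗮ,
      (inner ℂ (Φ (a : H)) (Φ (b : H)) : ℂ) = (inner ℂ (a : H) (b : H) : ℂ) := by
    intro a b
    have := J.inner_map_map a b
    exact this
  have hkmem : ((k : S) : H) ∈ (LinearMap.ker Φ)ᗮ := by
    rw [hKS]; exact k.2
  refine ⟨Φ ((k : S) : H), ?_, ?_⟩
  · intro x
    have hφx : φ x ∈ S := Submodule.le_topologicalClosure _ (Submodule.subset_span ⟨x, rfl⟩)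
    have := hk ⟨φ x, hφx⟩
    rw [hΦ]
    rw [← inner_conj_symm]
    simp only [Submodule.coe_mk] at this
    rw [this]
  · intro f hf
    have hfmem : f ∈ (LinearMap.ker Φ)ᗮ := by rw [hKS]; exact hf
    have h2 := hJ ⟨((k : S) : H), hkmem⟩ ⟨f, hfmem⟩
    simp only [Submodule.coe_mk] at h2
    rw [h2]
    exact (hk ⟨f, hf⟩).symm
end

section
/- Let H be an RKHS on E with kernel k and kernel functions k_y = k(·,y), let F ⊆ E be a uniqueness set for H (f ∈ H and f|_F = 0 imply f = 0), and suppose T : {k_x : x ∈ F} → K is a map into a Hilbert space K with k(x,y) = ⟨T k_y, T k_x⟩_K for all x,y ∈ F. Then T extends uniquely to a linear isometry from H into K; in particular H is isometrically isomorphic to a closed subspace of K. -/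
/- STATEMENT 6: `H` is an RKHS on `E` (realized as functions via the injective linear map
`ev`), with kernel functions `k x` satisfying `f(x) = ⟨f, k x⟩` (Mathlib: `⟪k x, f⟫`).
`F ⊆ E` is a uniqueness set, and `T` maps the kernel functions at points of `F` into a
Hilbert space `K` with `k(x,y) = ⟨T k_y, T k_x⟩_K`; in Mathlib's convention (conjugate
linear in the first slot) this reads `(ev (k y)) x = ⟪T x, T y⟫_K` since
`k(x,y) = k_y(x)`.  Then `T` extends uniquely to a linear isometry from `H` into `K`
(so `H` is isometrically isomorphic to a closed subspace of `K`). -/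
theorem stmt6 {H : Type*} [NormedAddCommGroup H] [InnerProductSpace ℂ H] [CompleteSpace H]
    {K : Type*} [NormedAddCommGroup K] [InnerProductSpace ℂ K] [CompleteSpace K]
    {E : Type*} (ev : H →ₗ[ℂ] (E → ℂ)) (hev : Function.Injective ev)
    (k : E → H) (hk : ∀ (f : H) (x : E), ev f x = (inner ℂ (k x) f : ℂ))
    (F : Set E)
    (huniq : ∀ f : H, (∀ x ∈ F, ev f x = 0) → f = 0)
    (T : E → K)
    (hT : ∀ x ∈ F, ∀ y ∈ F, ev (k y) x = (inner ℂ (T x) (T y) : ℂ)) :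
    ∃! L : H →ₗᵢ[ℂ] K, ∀ x ∈ F, L (k x) = T x := by
  classical
  -- the span of kernel functions at points of F
  set S : Submodule ℂ H := Submodule.span ℂ (k '' F) with hS
  -- S is dense
  have hSbot : Sᗮ = ⊥ := by
    rw [Submodule.eq_bot_iff]
    intro f hf
    apply huniq
    intro x hx
    rw [hk]
    exact (Submodule.mem_orthogonal S f).1 hf (k x)
      (Submodule.subset_span ⟨x, hx, rfl⟩)
  have hdense : Dense (S : Set H) :=
    Submodule.dense_iff_topologicalClosure_eq_top.2
      ((Submodule.topologicalClosure_eq_top_iff (K := S)).2 hSbot)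
  -- linear maps from finsupps
  set P : (↥F →₀ ℂ) →ₗ[ℂ] H := Finsupp.linearCombination ℂ (fun x : ↥F => k x) with hP
  set Q : (↥F →₀ ℂ) →ₗ[ℂ] K := Finsupp.linearCombination ℂ (fun x : ↥F => T x) with hQ
  have key : ∀ c d : ↥F →₀ ℂ, (inner ℂ (Q c) (Q d) : ℂ) = inner ℂ (P c) (P d) := by
    intro c d
    rw [hP, hQ]
    simp only [Finsupp.linearCombination_apply, Finsupp.sum]
    rw [sum_inner, sum_inner]
    refine Finset.sum_congr rfl fun x _ => ?_
    rw [inner_sum, inner_sum]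
    refine Finset.sum_congr rfl fun y _ => ?_
    rw [inner_smul_left, inner_smul_left, inner_smul_right, inner_smul_right]
    congr 1
    congr 1
    rw [← hT x x.2 y y.2, hk]
  have keynorm : ∀ c : ↥F →₀ ℂ, ‖Q c‖ = ‖P c‖ := by
    intro c
    have h1 := key c c
    rw [inner_self_eq_norm_sq_to_K, inner_self_eq_norm_sq_to_K] at h1
    have h2 : (‖Q c‖ : ℝ) ^ 2 = (‖P c‖ : ℝ) ^ 2 := by exact_mod_cast h1
    nlinarith [norm_nonneg (Q c), norm_nonneg (P c)]
  have hker : LinearMap.ker P ≤ LinearMap.ker Q := by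
    intro c hc
    rw [LinearMap.mem_ker] at hc ⊢
    rw [← norm_eq_zero, keynorm, hc, norm_zero]
  -- the induced map on range P
  set L₀ : ↥(LinearMap.range P) →ₗ[ℂ] K :=
    ((LinearMap.ker P).liftQ Q hker).comp (P.quotKerEquivRange.symm : _ →ₗ[ℂ] _) with hL₀
  have hL₀P : ∀ c : ↥F →₀ ℂ, L₀ ⟨P c, LinearMap.mem_range_self P c⟩ = Q c := by
    intro c
    rw [hL₀]
    simp only [LinearMap.comp_apply, LinearEquiv.coe_coe]
    rw [LinearMap.quotKerEquivRange_symm_apply_image P c (LinearMap.mem_range_self P c)]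
    rfl
  have hL₀norm : ∀ u : ↥(LinearMap.range P), ‖L₀ u‖ = ‖u‖ := by
    rintro ⟨u, c, rfl⟩
    rw [hL₀P c, keynorm]
    rfl
  -- continuous version
  set Lc : ↥(LinearMap.range P) →L[ℂ] K :=
    L₀.mkContinuous 1 (fun u => by rw [hL₀norm, one_mul]) with hLc
  -- range P = S
  have hrange : LinearMap.range P = S := by
    rw [hP, hS, Finsupp.range_linearCombination]
    congr 1
    exact (Set.image_eq_range k F).symm
  -- the inclusion map
  set e : ↥(LinearMap.range P) →L[ℂ] H := (LinearMap.range P).subtypeL with he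
  have hedense : DenseRange e := by
    have : Set.range e = (LinearMap.range P : Set H) := Subtype.range_coe
    rw [DenseRange, this, hrange]
    exact hdense
  have heui : IsUniformInducing e := isUniformEmbedding_subtype_val.isUniformInducing
  set Le : H →L[ℂ] K := Lc.extend e with hLe
  have hLee : ∀ u : ↥(LinearMap.range P), Le u = Lc u := fun u =>
    ContinuousLinearMap.extend_eq (f := Lc) (e := e) hedense heui u
  -- Le is norm preserving
  have hLenorm : ∀ f : H, ‖Le f‖ = ‖f‖ := by
    have hclosed : IsClosed {f : H | ‖Le f‖ = ‖f‖} :=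
      isClosed_eq (continuous_norm.comp Le.continuous) continuous_norm
    intro f
    refine hedense.induction_on f hclosed ?_
    intro u
    show ‖Le u‖ = ‖(u : H)‖
    rw [hLee u]
    exact hL₀norm u
  set L : H →ₗᵢ[ℂ] K := ⟨Le.toLinearMap, hLenorm⟩ with hLdef
  have hkmem : ∀ x (hx : x ∈ F), k x ∈ LinearMap.range P := by
    intro x hx
    rw [hrange]
    exact Submodule.subset_span ⟨x, hx, rfl⟩
  have hLk : ∀ x ∈ F, L (k x) = T x := by
    intro x hx
    have h1 : P (Finsupp.single ⟨x, hx⟩ 1) = k x := by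
      rw [hP]; simp
    have h2 : Q (Finsupp.single ⟨x, hx⟩ 1) = T x := by
      rw [hQ]; simp
    have : L (k x) = Le ((⟨k x, hkmem x hx⟩ : ↥(LinearMap.range P)) : H) := rfl
    rw [this, hLee]
    have : Lc (⟨k x, hkmem x hx⟩ : ↥(LinearMap.range P)) =
        L₀ (⟨k x, hkmem x hx⟩ : ↥(LinearMap.range P)) := rfl
    rw [this]
    have : (⟨k x, hkmem x hx⟩ : ↥(LinearMap.range P)) =
        ⟨P (Finsupp.single ⟨x, hx⟩ 1), LinearMap.mem_range_self P _⟩ := by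
      exact Subtype.ext h1.symm
    rw [this, hL₀P, h2]
  refine ⟨L, hLk, ?_⟩
  -- uniqueness
  intro L' hL'
  have hagree : Set.EqOn (L' : H → K) (L : H → K) (k '' F) := by
    rintro _ ⟨x, hx, rfl⟩
    rw [hL' x hx, hLk x hx]
  have hspan : Set.EqOn (L' : H → K) (L : H → K) (S : Set H) := by
    have := LinearMap.eqOn_span' (f := (L'.toLinearMap : H →ₗ[ℂ] K))
      (g := (L.toLinearMap : H →ₗ[ℂ] K)) hagree
    exact this
  have hall : (L' : H → K) = (L : H → K) :=
    Continuous.ext_on hdense L'.continuous L.continuous hspan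
  ext f
  exact congrFun hall f
end

section
/- Let I = (a,b) ⊆ ℝ be an open interval, c ∈ [a,b], and ρ a positive measurable weight on I with 1/ρ integrable on (c,x) for every x ∈ I. Then the Sobolev-type space H_{c,ρ}(I) = {f absolutely continuous on I : f(c) = 0, f' ∈ L²_ρ(I)} with inner product ⟨f,g⟩ = ∫ f' conj(g') ρ dt is an RKHS on I ∪ {c}, and its reproducing kernel is k(x,y) = ∫_{(c, med{x,y,c})} ρ(t)^{-1} dt, where med denotes the median of three extended reals. -/
open MeasureTheory Set intervalIntegral

/-- The median of three real numbers. -/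
noncomputable def median3 (x y z : ℝ) : ℝ := max (min x y) (min (max x y) z)

/-- Auxiliary Cauchy–Schwarz-type estimate via the AM–GM trick. -/
lemma aux_cs (N A B : ℝ) (hN : 0 ≤ N) (hA : 0 ≤ A) (hB : 0 ≤ B)
    (h : ∀ ε : ℝ, 0 < ε → N ≤ (ε * A + ε⁻¹ * B) / 2) : N ^ 2 ≤ B * A := by
  have hδ : ∀ δ : ℝ, 0 < δ → N ^ 2 ≤ (A + δ) * (B + δ) := by
    intro δ hδ0
    set s := Real.sqrt (A + δ) with hs_def
    set t := Real.sqrt (B + δ) with ht_def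
    have hs0 : 0 < s := Real.sqrt_pos.mpr (by linarith)
    have ht0 : 0 < t := Real.sqrt_pos.mpr (by linarith)
    have hs : s ^ 2 = A + δ := Real.sq_sqrt (by linarith)
    have ht : t ^ 2 = B + δ := Real.sq_sqrt (by linarith)
    have hk := h (t / s) (div_pos ht0 hs0)
    rw [inv_div] at hk
    have h1 : t / s * A + s / t * B ≤ 2 * (s * t) := by
      rw [div_mul_eq_mul_div, div_mul_eq_mul_div,
        div_add_div _ _ (ne_of_gt hs0) (ne_of_gt ht0),
        div_le_iff₀ (mul_pos hs0 ht0)]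
      nlinarith [hs, ht, hδ0, hA, hB, mul_nonneg hδ0.le hA, mul_nonneg hδ0.le hB,
        sq_nonneg δ]
    have h2 : N ≤ s * t := by linarith
    nlinarith [h2, hN, hs, ht]
  by_contra hcon
  push_neg at hcon
  set ε := N ^ 2 - B * A with hε_def
  have hε0 : 0 < ε := by linarith
  have hd0 : 0 < min 1 (ε / (2 * (A + B + 1))) :=
    lt_min one_pos (div_pos hε0 (by linarith))
  have h1 := hδ _ hd0
  have hd1 : min 1 (ε / (2 * (A + B + 1))) ≤ 1 := min_le_left _ _
  have hd2 : min 1 (ε / (2 * (A + B + 1))) ≤ ε / (2 * (A + B + 1)) := min_le_right _ _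
  have hd3 : min 1 (ε / (2 * (A + B + 1))) * (2 * (A + B + 1)) ≤ ε := by
    rw [← le_div_iff₀ (by linarith : (0:ℝ) < 2 * (A + B + 1))]
    exact hd2
  nlinarith [h1, hd0, hd1, hd3, hA, hB, mul_nonneg hd0.le hd0.le]

/- STATEMENT 7: Sobolev-type space.  `I = (a,b)` with `a,b` extended reals, `c ∈ [a,b]`
(a real number), `ρ` a positive measurable weight with `1/ρ` integrable on `(c,x)` for
all `x ∈ I`.  A function `f` on `I ∪ {c}` belongs to `H_{c,ρ}(I)` iff it is an indefinite
integral `f x = ∫_c^x g` of some `g ∈ L²_ρ(I)` (this encodes: `f` absolutely continuous,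
`f(c) = 0`, `f' = g ∈ L²_ρ(I)`); the inner product is `⟨f₁,f₂⟩ = ∫_I g₁ conj g₂ ρ`.
Conclusions: the kernel function `k_y : x ↦ ∫_{(c, med{x,y,c})} ρ⁻¹` (with derivative
`±χ_{(c,y)}/ρ`) belongs to the space for every `y ∈ I ∪ {c}`, it reproduces values:
`f y = ⟨f, k_y⟩ = ∫_I g conj(k_y') ρ`, and point evaluations are bounded, so
`H_{c,ρ}(I)` is an RKHS on `I ∪ {c}` with kernel `k(x,y) = ∫_{(c, med{x,y,c})} ρ⁻¹ dt`. -/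
theorem stmt7 (a b : EReal) (hab : a < b) (c : ℝ)
    (hca : a ≤ (c : EReal)) (hcb : (c : EReal) ≤ b)
    (ρ : ℝ → ℝ)
    (I : Set ℝ) (hI : I = {x : ℝ | a < (x : EReal) ∧ (x : EReal) < b})
    (hρpos : ∀ t ∈ I, 0 < ρ t) (hρmeas : Measurable ρ)
    (hρint : ∀ x ∈ I, IntegrableOn (fun t => (ρ t)⁻¹) (Set.uIoc c x))
    -- membership in `H_{c,ρ}(I)`: `f` is the indefinite integral from `c` of `g ∈ L²_ρ(I)`
    (InH : (ℝ → ℂ) → (ℝ → ℂ) → Prop)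
    (hInH : ∀ f g, InH f g ↔
      (AEStronglyMeasurable g (volume.restrict I) ∧
       IntegrableOn (fun t => ‖g t‖ ^ 2 * ρ t) I ∧
       ∀ x ∈ insert c I, f x = ∫ t in c..x, g t))
    -- the kernel function `k_y` and its derivative `±χ_{(c,y)}/ρ`
    (kfun : ℝ → ℝ → ℂ)
    (hkfun : ∀ y x, kfun y x = ((∫ t in Set.uIoc c (median3 x y c), (ρ t)⁻¹ : ℝ) : ℂ))
    (kder : ℝ → ℝ → ℂ)
    (hkder : ∀ y t, kder y t =
      (Set.uIoc c y).indicator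
        (fun t => if c ≤ y then (((ρ t)⁻¹ : ℝ) : ℂ) else -(((ρ t)⁻¹ : ℝ) : ℂ)) t) :
    -- (1) each kernel function belongs to `H_{c,ρ}(I)`
    (∀ y ∈ insert c I, InH (kfun y) (kder y)) ∧
    -- (2) reproducing property: `f y = ⟨f, k_y⟩`
    (∀ f g, InH f g → ∀ y ∈ insert c I,
      f y = ∫ t in I, g t * (starRingEnd ℂ) (kder y t) * (ρ t : ℂ)) ∧
    -- (3) point evaluations are bounded: `H_{c,ρ}(I)` is an RKHS on `I ∪ {c}`
    (∀ y ∈ insert c I, ∃ C : ℝ, ∀ f g, InH f g →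
      ‖f y‖ ^ 2 ≤ C * ∫ t in I, ‖g t‖ ^ 2 * ρ t) := by
  -- basic facts about `I`
  have hImeas : MeasurableSet I := by
    rw [hI]; exact measurable_coe_real_ereal measurableSet_Ioo
  have hIoo : ∀ y ∈ I, Set.Ioo (min c y) (max c y) ⊆ I := by
    intro y hy t ht
    rw [hI] at hy ⊢
    refine ⟨?_, ?_⟩
    · rcases min_lt_iff.mp ht.1 with h | h
      · exact lt_of_le_of_lt hca (by exact_mod_cast h)
      · exact lt_trans hy.1 (by exact_mod_cast h)
    · rcases lt_max_iff.mp ht.2 with h | h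
      · exact lt_of_lt_of_le (by exact_mod_cast h) hcb
      · exact lt_trans (by exact_mod_cast h) hy.2
  have hnull : ∀ y ∈ insert c I, volume (Set.uIoc c y \ I) = 0 := by
    intro y hy
    rcases hy with rfl | hy
    · rw [uIoc_of_le le_rfl, Set.Ioc_self]; simp
    · refine measure_mono_null ?_ (measure_singleton (max c y))
      rintro t ⟨ht1, ht2⟩
      have hmem : min c y < t ∧ t ≤ max c y := ht1
      have : t = max c y := by
        by_contra hne
        exact ht2 (hIoo y hy ⟨hmem.1, lt_of_le_of_ne hmem.2 hne⟩)
      simp [this]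
  have haeq : ∀ y ∈ insert c I,
      (I ∩ Set.uIoc c y : Set ℝ) =ᵐ[volume] (Set.uIoc c y : Set ℝ) := by
    intro y hy
    rw [MeasureTheory.ae_eq_set]
    constructor
    · rw [Set.diff_eq_empty.mpr Set.inter_subset_right]; exact measure_empty
    · rw [Set.diff_inter_self_eq_diff]; exact hnull y hy
  have hρinv_int : ∀ y ∈ insert c I,
      IntegrableOn (fun t => (ρ t)⁻¹) (Set.uIoc c y) volume := by
    intro y hy
    rcases hy with rfl | hy
    · rw [uIoc_of_le le_rfl, Set.Ioc_self]; exact integrableOn_empty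
    · exact hρint y hy
  have hmemI : ∀ y ∈ insert c I, ∀ᵐ t ∂volume, t ∈ Set.uIoc c y → t ∈ I := by
    intro y hy
    have h0 := hnull y hy
    rw [show Set.uIoc c y \ I = {t | ¬(t ∈ Set.uIoc c y → t ∈ I)} from by
      ext t; simp [Set.mem_diff]] at h0
    exact ae_iff.mpr h0
  refine ⟨?_, ?_, ?_⟩
  · -- (1) membership of kernel functions
    intro y hy
    rw [hInH]
    refine ⟨?_, ?_, ?_⟩
    · -- measurability
      have hrmeas : Measurable fun t : ℝ => (((ρ t)⁻¹ : ℝ) : ℂ) :=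
        Complex.measurable_ofReal.comp hρmeas.inv
      have hkm : Measurable (kder y) := by
        have hk : kder y = fun t => (Set.uIoc c y).indicator
            (fun t => if c ≤ y then (((ρ t)⁻¹ : ℝ) : ℂ) else -(((ρ t)⁻¹ : ℝ) : ℂ)) t :=
          funext (hkder y)
        rw [hk]
        by_cases hcy : c ≤ y <;>
          simp only [hcy, if_true, if_false] <;>
          exact Measurable.indicator (by first | exact hrmeas | exact hrmeas.neg)
            measurableSet_uIoc
      exact hkm.aestronglyMeasurable
    · -- square-integrability of the derivative
      have key : IntegrableOn ((Set.uIoc c y).indicator fun t => (ρ t)⁻¹) I volume := by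
        rw [IntegrableOn, integrable_indicator_iff measurableSet_uIoc, IntegrableOn,
          Measure.restrict_restrict measurableSet_uIoc]
        exact (hρinv_int y hy).mono_set Set.inter_subset_left
      refine key.congr_fun ?_ hImeas
      intro t ht
      by_cases hts : t ∈ Set.uIoc c y
      · have hρt := hρpos t ht
        simp only [Set.indicator_of_mem hts, hkder y t]
        split_ifs with h
        · simp only [Complex.norm_real, Real.norm_eq_abs,
            abs_of_nonneg (inv_nonneg.mpr hρt.le)]
          field_simp
        · simp only [norm_neg, Complex.norm_real, Real.norm_eq_abs,
            abs_of_nonneg (inv_nonneg.mpr hρt.le)]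
          field_simp
      · simp [Set.indicator_of_notMem hts, hkder y t]
    · -- the kernel function is the indefinite integral of its derivative
      intro x hx
      rw [hkfun]
      by_cases hcy : c ≤ y
      · have hkd : ∀ t, kder y t =
            (Set.Ioc c y).indicator (fun s => (((ρ s)⁻¹ : ℝ) : ℂ)) t := by
          intro t; rw [hkder, uIoc_of_le hcy]; simp [hcy]
        simp only [hkd]
        rcases le_total c x with hcx | hxc
        · have hmed : median3 x y c = min x y := by
            simp only [median3, min_def, max_def]; split_ifs <;> linarith
          rw [hmed, uIoc_of_le (le_min hcx hcy), intervalIntegral.integral_of_le hcx,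
            setIntegral_indicator measurableSet_Ioc, Set.Ioc_inter_Ioc, max_self]
          exact _root_.integral_ofReal.symm
        · have hmed : median3 x y c = c := by
            simp only [median3, min_def, max_def]; split_ifs <;> linarith
          rw [hmed, intervalIntegral.integral_of_ge hxc,
            setIntegral_indicator measurableSet_Ioc, Set.Ioc_inter_Ioc,
            sup_eq_right.mpr hxc, inf_eq_left.mpr hcy, uIoc_of_le (le_refl c),
            Set.Ioc_self]
          simp
      · have hyc : y ≤ c := (not_le.mp hcy).le
        have hkd : ∀ t, kder y t =
            (Set.Ioc y c).indicator (fun s => -(((ρ s)⁻¹ : ℝ) : ℂ)) t := by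
          intro t; rw [hkder, uIoc_of_ge hyc]; simp [hcy]
        simp only [hkd]
        rcases le_total x c with hxc | hcx
        · have hmed : median3 x y c = max x y := by
            simp only [median3, min_def, max_def]; split_ifs <;> linarith
          rw [hmed, uIoc_of_ge (max_le hxc hyc), intervalIntegral.integral_of_ge hxc,
            setIntegral_indicator measurableSet_Ioc, Set.Ioc_inter_Ioc, min_self,
            MeasureTheory.integral_neg, neg_neg]
          exact _root_.integral_ofReal.symm
        · have hmed : median3 x y c = c := by
            simp only [median3, min_def, max_def]; split_ifs <;> linarith
          rw [hmed, intervalIntegral.integral_of_le hcx,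
            setIntegral_indicator measurableSet_Ioc, Set.Ioc_inter_Ioc,
            sup_eq_left.mpr hyc, inf_eq_right.mpr hcx, uIoc_of_le (le_refl c),
            Set.Ioc_self]
          simp
  · -- (2) reproducing property
    intro f g hfg y hy
    obtain ⟨hgm, hgint, hrep⟩ := (hInH f g).mp hfg
    rw [hrep y hy]
    symm
    by_cases hcy : c ≤ y
    · have heq : Set.EqOn (fun t => g t * (starRingEnd ℂ) (kder y t) * ((ρ t : ℝ) : ℂ))
          ((Set.Ioc c y).indicator g) I := by
        intro t ht
        by_cases hts : t ∈ Set.Ioc c y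
        · have hρt : (ρ t : ℂ) ≠ 0 := Complex.ofReal_ne_zero.mpr (hρpos t ht).ne'
          simp only [hkder, uIoc_of_le hcy, Set.indicator_of_mem hts, if_pos hcy,
            map_inv₀, Complex.conj_ofReal, Complex.ofReal_inv]
          field_simp
        · simp [hkder, uIoc_of_le hcy, Set.indicator_of_notMem hts]
      have step1 : (∫ t in I, g t * (starRingEnd ℂ) (kder y t) * ((ρ t : ℝ) : ℂ))
          = ∫ t in I, ((Set.Ioc c y).indicator g) t :=
        setIntegral_congr_fun hImeas heq
      rw [step1, setIntegral_indicator measurableSet_Ioc,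
        show I ∩ Set.Ioc c y = I ∩ Set.uIoc c y from by rw [uIoc_of_le hcy],
        setIntegral_congr_set (haeq y hy), uIoc_of_le hcy,
        intervalIntegral.integral_of_le hcy]
    · have hyc : y ≤ c := (not_le.mp hcy).le
      have heq : Set.EqOn (fun t => g t * (starRingEnd ℂ) (kder y t) * ((ρ t : ℝ) : ℂ))
          ((Set.Ioc y c).indicator (fun t => -g t)) I := by
        intro t ht
        by_cases hts : t ∈ Set.Ioc y c
        · have hρt : (ρ t : ℂ) ≠ 0 := Complex.ofReal_ne_zero.mpr (hρpos t ht).ne'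
          simp only [hkder, uIoc_of_ge hyc, Set.indicator_of_mem hts, if_neg hcy,
            map_neg, map_inv₀, Complex.conj_ofReal, Complex.ofReal_inv]
          field_simp
        · simp [hkder, uIoc_of_ge hyc, Set.indicator_of_notMem hts]
      have step1 : (∫ t in I, g t * (starRingEnd ℂ) (kder y t) * ((ρ t : ℝ) : ℂ))
          = ∫ t in I, ((Set.Ioc y c).indicator (fun t => -g t)) t :=
        setIntegral_congr_fun hImeas heq
      rw [step1, setIntegral_indicator measurableSet_Ioc,
        show I ∩ Set.Ioc y c = I ∩ Set.uIoc c y from by rw [uIoc_of_ge hyc],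
        setIntegral_congr_set (haeq y hy), uIoc_of_ge hyc,
        intervalIntegral.integral_of_ge hyc, MeasureTheory.integral_neg]
  · -- (3) boundedness of point evaluation
    intro y hy
    refine ⟨∫ t in Set.uIoc c y, (ρ t)⁻¹, ?_⟩
    intro f g hfg
    obtain ⟨hgm, hgint, hrep⟩ := (hInH f g).mp hfg
    set S := Set.uIoc c y with hS_def
    set A := ∫ t in I, ‖g t‖ ^ 2 * ρ t with hA_def
    set B := ∫ t in S, (ρ t)⁻¹ with hB_def
    set A' := ∫ t in S, ‖g t‖ ^ 2 * ρ t with hA'_def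
    have hB0 : 0 ≤ B := by
      rw [hB_def, ← setIntegral_congr_set (haeq y hy)]
      exact setIntegral_nonneg (hImeas.inter measurableSet_uIoc)
        (fun t ht => inv_nonneg.mpr (hρpos t ht.1).le)
    have hA'0 : 0 ≤ A' := by
      rw [hA'_def, ← setIntegral_congr_set (haeq y hy)]
      exact setIntegral_nonneg (hImeas.inter measurableSet_uIoc)
        (fun t ht => mul_nonneg (sq_nonneg _) (hρpos t ht.1).le)
    have hint2S : IntegrableOn (fun t => ‖g t‖ ^ 2 * ρ t) S volume :=
      (hgint.mono_set Set.inter_subset_left).congr_set_ae (haeq y hy).symm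
    have hintBS : IntegrableOn (fun t => (ρ t)⁻¹) S volume := hρinv_int y hy
    have hA'le : A' ≤ A := by
      rw [hA'_def, hA_def]
      refine setIntegral_mono_set hgint ?_ ?_
      · refine (ae_restrict_iff' hImeas).mpr (Filter.Eventually.of_forall fun t ht => ?_)
        exact mul_nonneg (sq_nonneg _) (hρpos t ht).le
      · exact MeasureTheory.ae_le_set.mpr (hnull y hy)
    have key : ∀ ε : ℝ, 0 < ε → ‖f y‖ ≤ (ε * A' + ε⁻¹ * B) / 2 := by
      intro ε hε
      have step1 : ‖f y‖ ≤ ∫ t in S, ‖g t‖ := by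
        rw [hrep y hy]
        exact intervalIntegral.norm_integral_le_integral_norm_uIoc
      have step2 : (∫ t in S, ‖g t‖)
          ≤ ∫ t in S, (ε * (‖g t‖ ^ 2 * ρ t) + ε⁻¹ * (ρ t)⁻¹) / 2 := by
        refine integral_mono_of_nonneg (Filter.Eventually.of_forall fun t => norm_nonneg _)
          (((hint2S.const_mul ε).add (hintBS.const_mul ε⁻¹)).div_const 2) ?_
        filter_upwards [ae_restrict_of_ae (hmemI y hy), ae_restrict_mem measurableSet_uIoc]
          with t h1 h2
        have hp : 0 < ρ t := hρpos t (h1 h2)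
        have h3 : 0 < ε * ρ t := mul_pos hε hp
        rw [← mul_inv, le_div_iff₀ (by norm_num : (0:ℝ) < 2)]
        nlinarith [sq_nonneg (ε * ρ t * ‖g t‖ - 1), h3, mul_inv_cancel₀ h3.ne',
          norm_nonneg (g t)]
      have step3 : (∫ t in S, (ε * (‖g t‖ ^ 2 * ρ t) + ε⁻¹ * (ρ t)⁻¹) / 2)
          = (ε * A' + ε⁻¹ * B) / 2 := by
        rw [MeasureTheory.integral_div, MeasureTheory.integral_add (hint2S.const_mul ε) (hintBS.const_mul ε⁻¹),
          MeasureTheory.integral_const_mul, MeasureTheory.integral_const_mul]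
      linarith [step1, step2, step3.le, step3.ge]
    calc ‖f y‖ ^ 2 ≤ B * A' := aux_cs _ _ _ (norm_nonneg _) hA'0 hB0 key
      _ ≤ B * A := mul_le_mul_of_nonneg_left hA'le hB0
end

section
/- In the setting of the Sobolev-type space H_{c,ρ}(I): define φ : I → L²_ρ(I) by φ(x) = χ_{(c,x)}/ρ. Then the integral transform φ̂ : L²_ρ(I) → H_{c,ρ}(I), given by (φ̂ f)(x) = ∫_I f · (χ_{(c,x)}/ρ) · ρ dt = sign(x−c) ∫_c^x f dt, is a surjective isometry; in particular the family {χ_{(c,x)}/ρ : x ∈ I} has dense span in L²_ρ(I). -/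
open MeasureTheory Set intervalIntegral

/- STATEMENT 8: setting of the Sobolev-type space `H_{c,ρ}(I)` (membership predicate
`InH f g`: `f` is the indefinite integral from `c` of a derivative `g ∈ L²_ρ(I)`).
Define `φ : I → L²_ρ(I)` by `φ x = χ_{(c,x)}/ρ`.  Conclusions:
(1) `φ x ∈ L²_ρ(I)` for all `x ∈ I`;
(2) the integral transform `(φ̂ f)(x) = ∫_I f ⬝ conj(χ_{(c,x)}/ρ) ⬝ ρ dt` equals the signed
    integral `sign(x-c)∫_c^x f = ∫_{(c,x)} f`, it belongs to `H_{c,ρ}(I)` with derivative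
    `±f`, and the transform is an isometry: the `H_{c,ρ}` norm of `φ̂ f` equals the
    `L²_ρ` norm of `f`;
(3) `φ̂` is surjective onto `H_{c,ρ}(I)`;
(4) the family `{χ_{(c,x)}/ρ : x ∈ I}` is complete in `L²_ρ(I)` (its span is dense:
    only `0` is orthogonal to every `φ x`). -/
lemma ae_ne_const (c : ℝ) : ∀ᵐ t : ℝ, t ≠ c := by
  rw [ae_iff]
  simpa using measure_singleton (μ := (volume : Measure ℝ)) c

lemma sign_integral (c x : ℝ) (g : ℝ → ℂ) :
    (∫ t in Set.uIoc c x, (if c ≤ t then g t else -g t)) = ∫ t in c..x, g t := by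
  rcases le_or_gt c x with h | h
  · rw [Set.uIoc_of_le h, intervalIntegral.integral_of_le h]
    refine setIntegral_congr_fun measurableSet_Ioc fun t ht => ?_
    simp [ht.1.le]
  · rw [Set.uIoc_of_ge h.le, intervalIntegral.integral_of_ge h.le]
    have : (∫ t in Set.Ioc x c, (if c ≤ t then g t else -g t))
        = ∫ t in Set.Ioc x c, -g t := by
      refine setIntegral_congr_ae measurableSet_Ioc ?_
      filter_upwards [ae_ne_const c] with t htc ht
      have : ¬ c ≤ t := fun hle => htc (le_antisymm ht.2 hle)
      simp [this]
    rw [this, MeasureTheory.integral_neg]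

lemma integral_Ioc_split {f : ℝ → ℂ} {u m v : ℝ} (h1 : u ≤ m) (h2 : m ≤ v)
    (hf : IntegrableOn f (Set.Ioc u v)) :
    ∫ t in Set.Ioc u v, f t = (∫ t in Set.Ioc u m, f t) + ∫ t in Set.Ioc m v, f t := by
  rw [← Set.Ioc_union_Ioc_eq_Ioc h1 h2]
  exact setIntegral_union (Set.Ioc_disjoint_Ioc_of_le le_rfl) measurableSet_Ioc
    (hf.mono_set (Set.Ioc_subset_Ioc_right h2)) (hf.mono_set (Set.Ioc_subset_Ioc_left h1))

lemma ae_zero_of_integral_Ioc {f : ℝ → ℂ} {u v : ℝ}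
    (hf : IntegrableOn f (Set.Ioc u v))
    (h0 : ∀ y ∈ Set.Icc u v, (∫ t in Set.Ioc u y, f t) = 0) :
    f =ᵐ[volume.restrict (Set.Ioc u v)] 0 := by
  set ν := volume.restrict (Set.Ioc u v) with hν
  have hfν : Integrable f ν := hf
  have htot : (∫ t, f t ∂ν) = 0 := by
    rcases le_or_gt u v with huv | hvu
    · rw [hν, ← h0 v ⟨huv, le_rfl⟩]
    · rw [hν, Set.Ioc_eq_empty (not_lt.2 hvu.le)]; simp
  have key : ∀ s : Set ℝ, MeasurableSet s → (∫ t in s, f t ∂ν) = 0 := by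
    have h_eq : (inferInstance : MeasurableSpace ℝ)
        = MeasurableSpace.generateFrom { S : Set ℝ | ∃ l u', (id l : ℝ) < id u' ∧ Set.Ioc (id l) (id u') = S } := by
      rw [BorelSpace.measurable_eq (α := ℝ)]
      simpa using borel_eq_generateFrom_Ioc ℝ
    intro s hs
    refine MeasurableSpace.induction_on_inter
      (C := fun s _ => (∫ t in s, f t ∂ν) = 0)
      h_eq (isPiSystem_Ioc (id : ℝ → ℝ) (id : ℝ → ℝ)) (by simp) ?_ ?_ ?_ s hs
    · rintro t ht
      obtain ⟨l, u', hlu, rfl⟩ := ht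
      have hrr : (∫ x in Set.Ioc (id l) (id u'), f x ∂ν) = ∫ x in Set.Ioc l u' ∩ Set.Ioc u v, f x := by
        rw [hν, Measure.restrict_restrict measurableSet_Ioc]; rfl
      rw [hrr, Set.Ioc_inter_Ioc]
      rcases le_or_gt (min u' v) (max l u) with hle | hlt
      · rw [Set.Ioc_eq_empty (not_lt.2 hle)]; simp
      · set p := max l u with hp; set q := min u' v with hq
        have hup : u ≤ p := le_max_right _ _
        have hqv : q ≤ v := min_le_right _ _
        have hpq : p ≤ q := hlt.le
        have hsplit := integral_Ioc_split hup hpq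
          (hf.mono_set (Set.Ioc_subset_Ioc_right hqv))
        have h1 : (∫ t in Set.Ioc u q, f t) = 0 := h0 q ⟨hup.trans hpq, hqv⟩
        have h2 : (∫ t in Set.Ioc u p, f t) = 0 := h0 p ⟨hup, hpq.trans hqv⟩
        rw [h1, h2] at hsplit
        simpa using hsplit.symm
    · rintro t htm iht
      have hadd := integral_add_compl htm hfν
      rw [iht, htot, zero_add] at hadd
      exact hadd
    · rintro g hdisj hmeas ihC
      rw [integral_iUnion hmeas hdisj hfν.integrableOn]
      simp [ihC]
  exact hfν.ae_eq_zero_of_forall_setIntegral_eq_zero fun s hs _ => key s hs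

lemma restrict_ac_withDensity {I : Set ℝ} (hImeas : MeasurableSet I) {ρ : ℝ → ℝ}
    (hρmeas : Measurable ρ) (hρpos : ∀ t ∈ I, 0 < ρ t) :
    volume.restrict I ≪ (volume.restrict I).withDensity (fun t => ENNReal.ofReal (ρ t)) := by
  refine Measure.AbsolutelyContinuous.mk fun s hs h0 => ?_
  rw [withDensity_apply _ hs, Measure.restrict_restrict hs] at h0
  have hmeas : Measurable fun t => ENNReal.ofReal (ρ t) := hρmeas.ennreal_ofReal
  rw [lintegral_eq_zero_iff hmeas] at h0
  rw [Measure.restrict_apply hs]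
  rw [Filter.EventuallyEq, ae_restrict_iff' (hs.inter hImeas)] at h0
  have : ∀ᵐ t : ℝ, t ∉ s ∩ I := by
    filter_upwards [h0] with t ht hmem
    have := hρpos t hmem.2
    have := ht hmem
    simp [ENNReal.ofReal_eq_zero] at this
    linarith
  simpa [ae_iff] using this

lemma memL2_iff {I : Set ℝ} (hImeas : MeasurableSet I) {ρ : ℝ → ℝ}
    (hρmeas : Measurable ρ) (hρpos : ∀ t ∈ I, 0 < ρ t) (f : ℝ → ℂ) :
    MemLp f 2 ((volume.restrict I).withDensity (fun t => ENNReal.ofReal (ρ t))) ↔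
      (AEStronglyMeasurable f (volume.restrict I) ∧
        IntegrableOn (fun t => ‖f t‖ ^ 2 * ρ t) I) := by
  set ν := volume.restrict I with hν
  set μ := ν.withDensity (fun t => ENNReal.ofReal (ρ t)) with hμ
  have ac1 : μ ≪ ν := withDensity_absolutelyContinuous _ _
  have ac2 : ν ≪ μ := restrict_ac_withDensity hImeas hρmeas hρpos
  have hρae : ∀ᵐ t ∂ν, 0 ≤ ρ t := by
    rw [hν, ae_restrict_iff' hImeas]
    exact Filter.Eventually.of_forall fun t ht => (hρpos t ht).le
  have hmeasSM : AEStronglyMeasurable f μ ↔ AEStronglyMeasurable f ν :=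
    ⟨fun h => h.mono_ac ac2, fun h => h.mono_ac ac1⟩
  constructor
  · rintro hf
    have hsm : AEStronglyMeasurable f ν := hmeasSM.1 hf.aestronglyMeasurable
    refine ⟨hsm, ?_⟩
    have h2 : Integrable (fun t => ‖f t‖ ^ 2) μ :=
      (memLp_two_iff_integrable_sq_norm hf.aestronglyMeasurable).1 hf
    rw [hμ] at h2
    rw [integrable_withDensity_iff hρmeas.ennreal_ofReal
      (Filter.Eventually.of_forall fun t => ENNReal.ofReal_lt_top)] at h2
    refine h2.congr ?_
    filter_upwards [hρae] with t ht
    rw [ENNReal.toReal_ofReal ht]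
  · rintro ⟨hsm, hint⟩
    have hsmμ : AEStronglyMeasurable f μ := hmeasSM.2 hsm
    refine (memLp_two_iff_integrable_sq_norm hsmμ).2 ?_
    rw [hμ, integrable_withDensity_iff hρmeas.ennreal_ofReal
      (Filter.Eventually.of_forall fun t => ENNReal.ofReal_lt_top)]
    refine hint.congr ?_
    filter_upwards [hρae] with t ht
    rw [ENNReal.toReal_ofReal ht]


theorem stmt8 (a b : EReal) (hab : a < b) (c : ℝ)
    (hca : a ≤ (c : EReal)) (hcb : (c : EReal) ≤ b)
    (ρ : ℝ → ℝ)
    (I : Set ℝ) (hI : I = {x : ℝ | a < (x : EReal) ∧ (x : EReal) < b})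
    (hρpos : ∀ t ∈ I, 0 < ρ t) (hρmeas : Measurable ρ)
    (hρint : ∀ x ∈ I, IntegrableOn (fun t => (ρ t)⁻¹) (Set.uIoc c x))
    (μ : Measure ℝ)
    (hμ : μ = (volume.restrict I).withDensity (fun t => ENNReal.ofReal (ρ t)))
    (InH : (ℝ → ℂ) → (ℝ → ℂ) → Prop)
    (hInH : ∀ f g, InH f g ↔
      (AEStronglyMeasurable g (volume.restrict I) ∧
       IntegrableOn (fun t => ‖g t‖ ^ 2 * ρ t) I ∧
       ∀ x ∈ insert c I, f x = ∫ t in c..x, g t))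
    (φ : ℝ → ℝ → ℂ)
    (hφ : ∀ x, φ x = (Set.uIoc c x).indicator (fun t => (((ρ t)⁻¹ : ℝ) : ℂ))) :
    -- (1) `φ x ∈ L²_ρ(I)`
    (∀ x ∈ I, MemLp (φ x) 2 μ) ∧
    -- (2) the integral transform, membership and isometry
    (∀ f : ℝ → ℂ, MemLp f 2 μ →
      (∀ x ∈ insert c I,
        (∫ t in I, f t * (starRingEnd ℂ) (φ x t) * (ρ t : ℂ)) = ∫ t in Set.uIoc c x, f t) ∧
      InH (fun x => ∫ t in Set.uIoc c x, f t) (fun t => if c ≤ t then f t else -f t) ∧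
      (∫ t in I, ‖(if c ≤ t then f t else -f t)‖ ^ 2 * ρ t) = ∫ t in I, ‖f t‖ ^ 2 * ρ t) ∧
    -- (3) surjectivity onto `H_{c,ρ}(I)`
    (∀ f g, InH f g → ∃ h : ℝ → ℂ, MemLp h 2 μ ∧
      ∀ x ∈ insert c I, (∫ t in Set.uIoc c x, h t) = f x) ∧
    -- (4) completeness of the family `φ(I)` in `L²_ρ(I)`
    (∀ f : ℝ → ℂ, MemLp f 2 μ →
      (∀ x ∈ I, (∫ t in I, f t * (starRingEnd ℂ) (φ x t) * (ρ t : ℂ)) = 0) →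
      ∀ᵐ t ∂μ, f t = 0) := by
  subst hμ
  classical
  have hImeas : MeasurableSet I := by
    rw [hI]; exact measurable_coe_real_ereal measurableSet_Ioo
  -- membership facts
  have huIocI : ∀ x ∈ insert c I, Set.uIoc c x \ I ⊆ {c} := by
    rintro x hx t ⟨htu, htI⟩
    by_contra hne
    apply htI
    rw [hI]
    rcases Set.mem_insert_iff.1 hx with rfl | hxI
    · simp [Set.uIoc_of_le le_rfl] at htu
    · rw [hI] at hxI
      rcases Set.mem_uIoc.1 htu with ⟨h1, h2⟩ | ⟨h1, h2⟩
      · exact ⟨lt_of_le_of_lt hca (EReal.coe_lt_coe_iff.2 h1),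
          lt_of_le_of_lt (EReal.coe_le_coe_iff.2 h2) hxI.2⟩
      · refine ⟨lt_trans hxI.1 (EReal.coe_lt_coe_iff.2 h1), ?_⟩
        have h2' : t < c := lt_of_le_of_ne h2 (by simpa using hne)
        exact lt_of_lt_of_le (EReal.coe_lt_coe_iff.2 h2') hcb
  have hsub : ∀ x ∈ insert c I, (I ∩ Set.uIoc c x : Set ℝ) =ᵐ[volume] Set.uIoc c x := by
    intro x hx
    rw [MeasureTheory.ae_eq_set]
    refine ⟨measure_mono_null (fun t ht => (ht.2 ht.1.2).elim) measure_empty, ?_⟩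
    refine measure_mono_null (fun t ht => ?_) (measure_singleton c)
    exact huIocI x hx ⟨ht.1, fun hI' => ht.2 ⟨hI', ht.1⟩⟩
  -- key computation (transform = signed integral)
  have key1 : ∀ (f : ℝ → ℂ), ∀ x ∈ insert c I,
      (∫ t in I, f t * (starRingEnd ℂ) (φ x t) * (ρ t : ℂ)) = ∫ t in Set.uIoc c x, f t := by
    intro f x hx
    have step1 : (∫ t in I, f t * (starRingEnd ℂ) (φ x t) * (ρ t : ℂ))
        = ∫ t in I, (Set.uIoc c x).indicator f t := by
      refine setIntegral_congr_fun hImeas fun t ht => ?_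
      rw [hφ]
      by_cases htm : t ∈ Set.uIoc c x
      · rw [Set.indicator_of_mem htm, Set.indicator_of_mem htm, Complex.conj_ofReal,
          mul_assoc, ← Complex.ofReal_mul, inv_mul_cancel₀ (hρpos t ht).ne',
          Complex.ofReal_one, mul_one]
      · rw [Set.indicator_of_notMem htm, Set.indicator_of_notMem htm]
        simp
    rw [step1, setIntegral_indicator measurableSet_uIoc]
    exact setIntegral_congr_set (hsub x hx)
  have hmemiff := fun f => memL2_iff hImeas hρmeas hρpos f
  -- sign-flip helpers
  have haesm : ∀ g : ℝ → ℂ, AEStronglyMeasurable g (volume.restrict I) →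
      AEStronglyMeasurable (fun t => if c ≤ t then g t else -g t) (volume.restrict I) := by
    intro g hg
    have : (fun t => if c ≤ t then g t else -g t)
        = fun t => (Set.Ici c).indicator g t + (Set.Iio c).indicator (fun s => -g s) t := by
      funext t
      by_cases h : c ≤ t <;> simp [Set.indicator_apply, h, not_le.1, lt_of_not_ge]
    rw [this]
    exact ((hg.indicator measurableSet_Ici).add (hg.neg.indicator measurableSet_Iio))
  have hnormeq : ∀ g : ℝ → ℂ,
      (fun t => ‖(if c ≤ t then g t else -g t)‖ ^ 2 * ρ t) = fun t => ‖g t‖ ^ 2 * ρ t := by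
    intro g; funext t; by_cases h : c ≤ t <;> simp [h]
  have hsigma2 : ∀ (f : ℝ → ℂ) (x : ℝ),
      (∫ t in Set.uIoc c x, f t) = ∫ t in c..x, (if c ≤ t then f t else -f t) := by
    intro f x
    have := sign_integral c x (fun t => if c ≤ t then f t else -f t)
    have heq : (fun t => if c ≤ t then (if c ≤ t then f t else -f t)
        else -(if c ≤ t then f t else -f t)) = f := by
      funext t; by_cases h : c ≤ t <;> simp [h]
    rw [heq] at this
    exact this
  refine ⟨?_, ?_, ?_, ?_⟩
  · -- (1)
    intro x hx
    refine (hmemiff (φ x)).2 ⟨?_, ?_⟩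
    · rw [hφ]
      exact (((Complex.measurable_ofReal.comp hρmeas.inv).indicator
        measurableSet_uIoc).aestronglyMeasurable)
    · have heq : (fun t => ‖φ x t‖ ^ 2 * ρ t)
          = (Set.uIoc c x).indicator (fun t => ‖(((ρ t)⁻¹ : ℝ) : ℂ)‖ ^ 2 * ρ t) := by
        funext t
        rw [hφ]
        by_cases htm : t ∈ Set.uIoc c x
        · rw [Set.indicator_of_mem htm, Set.indicator_of_mem htm]
        · rw [Set.indicator_of_notMem htm, Set.indicator_of_notMem htm]; simp
      rw [heq, IntegrableOn, integrable_indicator_iff measurableSet_uIoc,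
        IntegrableOn, Measure.restrict_restrict measurableSet_uIoc]
      have hsub2 : IntegrableOn (fun t => (ρ t)⁻¹) (Set.uIoc c x ∩ I) volume :=
        (hρint x hx).mono_set Set.inter_subset_left
      refine hsub2.congr_fun (fun t ht => ?_) (measurableSet_uIoc.inter hImeas)
      have hρt := hρpos t ht.2
      rw [Complex.norm_real, Real.norm_eq_abs, abs_of_pos (inv_pos.2 hρt)]
      field_simp
  · -- (2)
    intro f hf
    obtain ⟨hsm, hint⟩ := (hmemiff f).1 hf
    refine ⟨key1 f, ?_, ?_⟩
    · rw [hInH]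
      refine ⟨haesm f hsm, ?_, ?_⟩
      · rw [hnormeq f]; exact hint
      · intro x hx; exact hsigma2 f x
    · have := congrArg (fun g => ∫ t in I, g t) (hnormeq f)
      simpa using this
  · -- (3)
    intro f g hfg
    rw [hInH] at hfg
    obtain ⟨hg1, hg2, hg3⟩ := hfg
    refine ⟨fun t => if c ≤ t then g t else -g t, ?_, ?_⟩
    · exact (hmemiff _).2 ⟨haesm g hg1, by rw [hnormeq g]; exact hg2⟩
    · intro x hx
      rw [sign_integral c x g]
      exact (hg3 x hx).symm
  · -- (4)
    intro f hf hz
    obtain ⟨hsm, hint⟩ := (hmemiff f).1 hf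
    have hz' : ∀ x ∈ I, (∫ t in Set.uIoc c x, f t) = 0 := fun x hx =>
      (key1 f x (Set.mem_insert_of_mem _ hx)).symm.trans (hz x hx)
    -- f is integrable on each uIoc c x
    have hfint : ∀ x ∈ I, IntegrableOn f (Set.uIoc c x) volume := by
      intro x hx
      have hres : volume.restrict (Set.uIoc c x ∩ I) = volume.restrict (Set.uIoc c x) := by
        rw [Set.inter_comm]
        exact Measure.restrict_congr_set (hsub x (Set.mem_insert_of_mem _ hx))
      have h1 : IntegrableOn (fun t => ‖f t‖ ^ 2 * ρ t) (Set.uIoc c x) volume := by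
        have := hint.mono_set (Set.inter_subset_right : Set.uIoc c x ∩ I ⊆ I)
        rwa [IntegrableOn, hres] at this
      have h2 : IntegrableOn (fun t => (ρ t)⁻¹) (Set.uIoc c x) volume := hρint x hx
      have hsmu : AEStronglyMeasurable f (volume.restrict (Set.uIoc c x)) := by
        have := hsm.restrict (s := Set.uIoc c x)
        rwa [Measure.restrict_restrict measurableSet_uIoc, hres] at this
      refine Integrable.mono' (h1.add h2) hsmu ?_
      rw [ae_restrict_iff' measurableSet_uIoc]
      filter_upwards [ae_ne_const c] with t htc htmem
      have htI : t ∈ I := by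
        by_contra htI
        exact htc (huIocI x (Set.mem_insert_of_mem _ hx) ⟨htmem, htI⟩)
      have hρt := hρpos t htI
      have hn : (0:ℝ) ≤ ‖f t‖ := norm_nonneg _
      simp only [Pi.add_apply]
      rw [← mul_le_mul_iff_of_pos_right hρt]
      have hinv : (ρ t)⁻¹ * ρ t = 1 := inv_mul_cancel₀ hρt.ne'
      nlinarith [sq_nonneg (‖f t‖ * ρ t - 1), mul_nonneg hn hρt.le]
    -- each uIoc gives a null set
    have hx0 : ∀ x ∈ I, volume ({t | f t ≠ 0} ∩ Set.uIoc c x) = 0 := by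
      intro x hx
      rcases le_total c x with hcx | hxc
      · rw [Set.uIoc_of_le hcx]
        have hae : f =ᵐ[volume.restrict (Set.Ioc c x)] 0 := by
          refine ae_zero_of_integral_Ioc ?_ ?_
          · have := hfint x hx; rwa [Set.uIoc_of_le hcx] at this
          · intro y hy
            rcases eq_or_lt_of_le hy.1 with rfl | hcy
            · simp
            · have hyI : y ∈ I := by
                rw [hI]
                refine ⟨lt_of_le_of_lt hca (EReal.coe_lt_coe_iff.2 hcy), ?_⟩
                rw [hI] at hx
                exact lt_of_le_of_lt (EReal.coe_le_coe_iff.2 hy.2) hx.2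
              have := hz' y hyI
              rwa [Set.uIoc_of_le hcy.le] at this
        have := hae
        rw [Filter.EventuallyEq, ae_iff, Measure.restrict_apply' measurableSet_Ioc] at this
        simpa using this
      · rw [Set.uIoc_of_ge hxc]
        have hae : f =ᵐ[volume.restrict (Set.Ioc x c)] 0 := by
          have hfx : IntegrableOn f (Set.Ioc x c) volume := by
            have := hfint x hx; rwa [Set.uIoc_of_ge hxc] at this
          refine ae_zero_of_integral_Ioc hfx ?_
          intro y hy
          have hxc0 : (∫ t in Set.Ioc x c, f t) = 0 := by
            have := hz' x hx; rwa [Set.uIoc_of_ge hxc] at this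
          have hyc0 : (∫ t in Set.Ioc y c, f t) = 0 := by
            rcases eq_or_lt_of_le hy.2 with rfl | hyc
            · simp
            · have hyI : y ∈ I := by
                rw [hI]
                rw [hI] at hx
                refine ⟨lt_of_lt_of_le hx.1 (EReal.coe_le_coe_iff.2 hy.1), ?_⟩
                exact lt_of_lt_of_le (EReal.coe_lt_coe_iff.2 hyc) hcb
              have := hz' y hyI
              rwa [Set.uIoc_of_ge hyc.le] at this
          have hsplit := integral_Ioc_split hy.1 hy.2 hfx
          rw [hxc0, hyc0, add_zero] at hsplit
          exact hsplit.symm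
        have := hae
        rw [Filter.EventuallyEq, ae_iff, Measure.restrict_apply' measurableSet_Ioc] at this
        simpa using this
    -- cover I (minus c) by countably many uIoc's
    have hcov : {t | f t ≠ 0} ∩ I ⊆ {c} ∪
        ⋃ (q : ℚ), (if ((q : ℝ) : ℝ) ∈ I then {t | f t ≠ 0} ∩ Set.uIoc c ((q : ℝ)) else ∅) := by
      rintro t ⟨htf, htI⟩
      by_cases htc : t = c
      · exact Or.inl htc
      · right
        have htI' := htI
        rw [hI] at htI'
        rcases lt_or_gt_of_ne htc with hlt | hgt
        · obtain ⟨q, hq1, hq2⟩ := EReal.lt_iff_exists_rat_btwn.1 htI'.1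
          have hqt : (q : ℝ) < t := EReal.coe_lt_coe_iff.1 hq2
          have hqI : ((q : ℝ) : ℝ) ∈ I := by
            rw [hI]
            exact ⟨hq1, lt_trans hq2 htI'.2⟩
          refine Set.mem_iUnion.2 ⟨q, ?_⟩
          rw [if_pos hqI]
          exact ⟨htf, Set.mem_uIoc.2 (Or.inr ⟨hqt, hlt.le⟩)⟩
        · obtain ⟨q, hq1, hq2⟩ := EReal.lt_iff_exists_rat_btwn.1 htI'.2
          have htq : t < (q : ℝ) := EReal.coe_lt_coe_iff.1 hq1
          have hqI : ((q : ℝ) : ℝ) ∈ I := by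
            rw [hI]
            exact ⟨lt_trans htI'.1 hq1, hq2⟩
          refine Set.mem_iUnion.2 ⟨q, ?_⟩
          rw [if_pos hqI]
          exact ⟨htf, Set.mem_uIoc.2 (Or.inl ⟨hgt, htq.le⟩)⟩
    have hIz : volume ({t | f t ≠ 0} ∩ I) = 0 := by
      refine measure_mono_null hcov (measure_union_null (measure_singleton c)
        (measure_iUnion_null fun q => ?_))
      split_ifs with h
      · exact hx0 _ h
      · simp
    have hνz : ∀ᵐ t ∂(volume.restrict I), f t = 0 := by
      rw [ae_iff, Measure.restrict_apply' hImeas]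
      simpa using hIz
    exact ((withDensity_absolutelyContinuous (volume.restrict I) _).ae_le hνz : _)
end
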